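/- Let γ_1 ∈ Dis_k(n) and γ_2 ∈ Dis_j(n). If σ ∈ Dis(n) is a least upper bound of γ_1 and γ_2 in the majorization order on Dis(n), then len(σ) = min{j, k}; and if ρ ∈ Dis(n) is a greatest lower bound of γ_1 and γ_2 in Dis(n), then len(ρ) = max{j, k}. In particular, if γ_1, γ_2 ∈ Dis_k(n), then any least upper bound and any greatest lower bound of γ_1 and γ_2 in Dis(n) lie in Dis_k(n). -/

import Mathlib

/-- A partition: a non-increasing list of positive integers. -/
def IsPartition (π : List ℕ) : Prop :=
  π.Pairwise (· ≥ ·) ∧ ∀ x ∈ π, 0 < x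

/-- A partition of `n` into distinct positive parts, listed in (strictly) decreasing order. -/
def DisPart (n : ℕ) (γ : List ℕ) : Prop :=
  γ.Pairwise (· > ·) ∧ (∀ x ∈ γ, 0 < x) ∧ γ.sum = n

/-- A partition of `n` into exactly `k` distinct positive parts. -/
def DisPartK (n k : ℕ) (γ : List ℕ) : Prop :=
  DisPart n γ ∧ γ.length = k

/-- `β` majorizes `α`. -/
def Majorizes (β α : List ℕ) : Prop :=
  β.sum = α.sum ∧ ∀ k ≤ min α.length β.length, (α.take k).sum ≤ (β.take k).sum

/-- α(π): the parts `d_i − i + 1` for 1-based indices `i` with `d_i ≥ i`. -/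
def alphaOf (π : List ℕ) : List ℕ :=
  (List.range π.length).filterMap
    (fun i => if i + 1 ≤ π.getD i 0 then some (π.getD i 0 - i) else none)

/-- Number of boxes of the Ferrers diagram strictly below the diagonal in (1-based) column `j`. -/
def betaColCount (π : List ℕ) (j : ℕ) : ℕ :=
  ((List.range π.length).filter (fun i => decide (j ≤ i ∧ j ≤ π.getD i 0))).length

/-- β(π): the positive column counts below the main diagonal, in decreasing order. -/
def betaOf (π : List ℕ) : List ℕ :=
  ((List.range π.length).map (fun j => betaColCount π (j + 1))).filter (fun c => c != 0)

/-- The mark (modified Durfee number) `m(π) = max {i : d_i ≥ i − 1}` (1-based indices). -/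
noncomputable def mark (π : List ℕ) : ℕ :=
  sSup {i : ℕ | 1 ≤ i ∧ i ≤ π.length ∧ i ≤ π.getD (i - 1) 0 + 1}

def IsIndepSet {V : Type*} (G : SimpleGraph V) (s : Set V) : Prop :=
  s.Pairwise (fun v w => ¬ G.Adj v w)

/-- `(K, S)` is a KS-partition of `G`. -/
def IsKS {V : Type*} [Fintype V] (G : SimpleGraph V) (K S : Finset V) : Prop :=
  (∀ v, v ∈ K ∨ v ∈ S) ∧ Disjoint K S ∧ G.IsClique (K : Set V) ∧ IsIndepSet G (S : Set V)

def IsSplit {V : Type*} [Fintype V] (G : SimpleGraph V) : Prop :=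
  ∃ K S, IsKS G K S

noncomputable def cliqueNum {V : Type*} [Fintype V] (G : SimpleGraph V) : ℕ :=
  sSup {n | ∃ s : Finset V, G.IsNClique n s}

noncomputable def indepNum {V : Type*} [Fintype V] (G : SimpleGraph V) : ℕ :=
  sSup {n | ∃ s : Finset V, IsIndepSet G (s : Set V) ∧ s.card = n}

/-- A balanced split graph: some KS-partition is simultaneously K-max and S-max. -/
def IsBalancedSplit {V : Type*} [Fintype V] (G : SimpleGraph V) : Prop :=
  IsSplit G ∧ ∃ K S, IsKS G K S ∧ K.card = cliqueNum G ∧ S.card = indepNum G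

/-- An unbalanced split graph. -/
def IsUnbalancedSplit {V : Type*} [Fintype V] (G : SimpleGraph V) : Prop :=
  IsSplit G ∧ ¬ ∃ K S, IsKS G K S ∧ K.card = cliqueNum G ∧ S.card = indepNum G

/-- `π` is the degree sequence of `G` (degrees in non-increasing order). -/
def HasDegSeq {V : Type*} [Fintype V] (G : SimpleGraph V) [DecidableRel G.Adj]
    (π : List ℕ) : Prop :=
  π.Pairwise (· ≥ ·) ∧ (π : Multiset ℕ) = Finset.univ.val.map (fun v => G.degree v)

def NoIsolated {V : Type*} [Fintype V] (G : SimpleGraph V) [DecidableRel G.Adj] : Prop :=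
  ∀ v, 0 < G.degree v

def IsThreshold {V : Type*} [Fintype V] (G : SimpleGraph V) : Prop :=
  ∃ (t : ℝ) (a : V → ℝ), 0 < t ∧ (∀ v, 0 < a v) ∧
    ∀ s : Finset V, (IsIndepSet G (s : Set V) ↔ ∑ v ∈ s, a v ≤ t)

noncomputable def chromNum {V : Type*} [Fintype V] (G : SimpleGraph V) : ℕ :=
  sInf {n | G.Colorable n}

def IsNG {V : Type*} [Fintype V] (G : SimpleGraph V) : Prop :=
  chromNum G + chromNum Gᶜ = Fintype.card V + 1

def ngA {V : Type*} [Fintype V] (G : SimpleGraph V) [DecidableRel G.Adj] : Set V :=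
  {v | G.degree v = chromNum G - 1}

def IsNG1 {V : Type*} [Fintype V] (G : SimpleGraph V) [DecidableRel G.Adj] : Prop :=
  IsNG G ∧ G.IsClique (ngA G)

def IsNG2 {V : Type*} [Fintype V] (G : SimpleGraph V) [DecidableRel G.Adj] : Prop :=
  IsNG G ∧ IsIndepSet G (ngA G)

def IsNG3 {V : Type*} [Fintype V] (G : SimpleGraph V) [DecidableRel G.Adj] : Prop :=
  IsNG G ∧ Nonempty ((G.induce (ngA G)) ≃g SimpleGraph.cycleGraph 5)

/-- `[α|β]` is an S-block for the integer `n`. -/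
def IsSBlock (n : ℕ) (α β : List ℕ) : Prop :=
  DisPart n α ∧ DisPart n β ∧ Majorizes β α ∧
    (α.length = β.length ∨ α.length = β.length + 1)

/-- `[α₁|β₁] ⪰ [α₂|β₂]` in the block order. -/
def BlockMaj (α₁ β₁ α₂ β₂ : List ℕ) : Prop :=
  Majorizes α₁ α₂ ∧ Majorizes β₂ β₁

/-- τ'_k(n) = (n − C(k,2), k−1, k−2, …, 2, 1). -/
def tauMax (n k : ℕ) : List ℕ :=
  (n - Nat.choose k 2) :: ((List.range (k - 1)).reverse.map (· + 1))

/-- τ_k(n): parts (k−i+1)+q+1 for 1 ≤ i ≤ r and (k−i+1)+q for r < i ≤ k,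
where n − C(k+1,2) = qk + r, 0 ≤ r < k. -/
def tauMin (n k : ℕ) : List ℕ :=
  (List.range k).map
    (fun i => (k - i) + (n - Nat.choose (k + 1) 2) / k +
      (if i < (n - Nat.choose (k + 1) 2) % k then 1 else 0))

/-- `β` covers `α` in `Dis(n)`. -/
def CoversDis (n : ℕ) (β α : List ℕ) : Prop :=
  DisPart n α ∧ DisPart n β ∧ Majorizes β α ∧ β ≠ α ∧
    ¬ ∃ γ, DisPart n γ ∧ Majorizes β γ ∧ Majorizes γ α ∧ γ ≠ α ∧ γ ≠ β

/-- `[α₁|β₁]` covers `[α₂|β₂]` in `S-Block(n)`. -/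
def BlockCovers (n : ℕ) (α₁ β₁ α₂ β₂ : List ℕ) : Prop :=
  IsSBlock n α₁ β₁ ∧ IsSBlock n α₂ β₂ ∧ BlockMaj α₁ β₁ α₂ β₂ ∧ ¬(α₁ = α₂ ∧ β₁ = β₂) ∧
    ¬ ∃ α β, IsSBlock n α β ∧ BlockMaj α₁ β₁ α β ∧ BlockMaj α β α₂ β₂ ∧
      ¬(α = α₁ ∧ β = β₁) ∧ ¬(α = α₂ ∧ β = β₂)

/-- `[α|β]` is a threshold-covered block: member of TC(n). -/
def InTC (n : ℕ) (α β : List ℕ) : Prop :=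
  IsSBlock n α β ∧ CoversDis n β α

def IsLubDis (n : ℕ) (a b c : List ℕ) : Prop :=
  Majorizes c a ∧ Majorizes c b ∧
    ∀ d, DisPart n d → Majorizes d a → Majorizes d b → Majorizes d c

def IsGlbDis (n : ℕ) (a b c : List ℕ) : Prop :=
  Majorizes a c ∧ Majorizes b c ∧
    ∀ d, DisPart n d → Majorizes a d → Majorizes b d → Majorizes c d

private lemma two_choose (k : ℕ) : 2 * Nat.choose k 2 = k * (k - 1) := by
  induction k with
  | zero => rfl
  | succ t ih =>
    rw [Nat.choose_succ_succ, Nat.choose_one_right]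
    cases t with
    | zero => rfl
    | succ u => simp only [Nat.succ_sub_one] at *; ring_nf at *; omega

private lemma list_range_map_sum (n : ℕ) (f : ℕ → ℕ) :
    ((List.range n).map f).sum = ∑ x ∈ Finset.range n, f x := by
  induction n with
  | zero => simp
  | succ n ih => rw [List.range_succ, Finset.sum_range_succ]; simp [ih]

private lemma rs (t : ℕ) : 2 * ((List.range t).map (· + 1)).sum = t * (t + 1) := by
  induction t with
  | zero => rfl
  | succ u ih => rw [List.range_succ]; simp only [List.map_append, List.sum_append]; simp at *; nlinarith

private lemma auxH {l : List ℕ} (hs : l.Pairwise (· > ·)) {g : ℕ} (hg : ∀ x ∈ l, g ≤ x) :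
    ∀ a, g ≤ a → (∀ x ∈ l, x < a) → g + l.length ≤ a := by
  induction l with
  | nil => intro a ha _; simpa using ha
  | cons b t ih =>
    intro a _ hlt
    rw [List.pairwise_cons] at hs
    have hb : g + t.length ≤ b :=
      ih hs.2 (fun x hx => hg x (List.mem_cons_of_mem _ hx)) b
        (hg b (List.mem_cons_self)) hs.1
    have := hlt b (List.mem_cons_self)
    simp only [List.length_cons]
    omega

private lemma lemL {l : List ℕ} (hs : l.Pairwise (· > ·)) {g : ℕ} (hg : ∀ x ∈ l, g ≤ x) :
    2 * (l.length * g) + l.length * l.length ≤ 2 * l.sum + l.length := by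
  induction l with
  | nil => simp
  | cons a t ih =>
    rw [List.pairwise_cons] at hs
    have hgt : ∀ x ∈ t, g ≤ x := fun x hx => hg x (List.mem_cons_of_mem _ hx)
    have iht := ih hs.2 hgt
    have ha : g + t.length ≤ a := auxH hs.2 hgt a (hg a (List.mem_cons_self)) hs.1
    simp only [List.length_cons, List.sum_cons]
    nlinarith

private lemma lemU {l : List ℕ} (hs : l.Pairwise (· > ·)) {h : ℕ} (hg : ∀ x ∈ l, x < h) :
    2 * l.sum + l.length * l.length + l.length ≤ 2 * (l.length * h) := by
  induction l generalizing h with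
  | nil => simp
  | cons a t ih =>
    rw [List.pairwise_cons] at hs
    have iht := ih hs.2 hs.1
    have ha : a < h := hg a (List.mem_cons_self)
    simp only [List.length_cons, List.sum_cons]
    nlinarith

private lemma lemDis {l : List ℕ} (hs : l.Pairwise (· > ·)) (hp : ∀ x ∈ l, 0 < x) :
    l.length * (l.length + 1) ≤ 2 * l.sum := by
  have := lemL hs (g := 1) hp
  nlinarith

private lemma lenMaj {β α : List ℕ} (h : Majorizes β α) (hp : ∀ x ∈ β, 0 < x) :
    β.length ≤ α.length := by
  by_contra hc
  push_neg at hc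
  have h2 := h.2 α.length (by omega)
  rw [List.take_length] at h2
  have hsplit := List.sum_take_add_sum_drop β α.length
  have hne : β.drop α.length ≠ [] := by
    simp only [ne_eq, List.drop_eq_nil_iff]
    omega
  have hpos : 0 < (β.drop α.length).sum :=
    List.sum_pos _ (fun x hx => hp x (List.mem_of_mem_drop hx)) hne
  have hsa := h.1
  omega

private lemma disZero {γ : List ℕ} (hp : ∀ x ∈ γ, 0 < x) (hsum : γ.sum = 0) : γ = [] := by
  cases γ with
  | nil => rfl
  | cons a t => simp only [List.sum_cons] at hsum; have := hp a (List.mem_cons_self); omega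

private lemma sorted_getElem_lt {γ : List ℕ} (hs : γ.Pairwise (· > ·)) {a b : ℕ}
    (hb : b < γ.length) (hab : a < b) : γ[b] < γ[a]'(by omega) := by
  exact List.pairwise_iff_getElem.1 hs a b (by omega) hb hab

/-- elements of `take i` are ≥ the (i-1)-th element -/

private lemma take_ge {γ : List ℕ} (hs : γ.Pairwise (· > ·)) {i : ℕ} (h1 : 1 ≤ i)
    (h2 : i ≤ γ.length) : ∀ x ∈ γ.take i, γ[i-1]'(by omega) ≤ x := by
  intro x hx
  rw [List.mem_iff_getElem] at hx
  obtain ⟨t, ht, rfl⟩ := hx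
  have htlen : t < i := by simp [List.length_take] at ht; omega
  rw [List.getElem_take]
  rcases Nat.lt_or_ge t (i-1) with h | h
  · exact le_of_lt (sorted_getElem_lt hs (by omega) h)
  · have : t = i - 1 := by omega
    subst this; exact le_refl _

private lemma drop_lt {γ : List ℕ} (hs : γ.Pairwise (· > ·)) {i : ℕ} (h1 : 1 ≤ i)
    (h2 : i ≤ γ.length) : ∀ x ∈ γ.drop i, x < γ[i-1]'(by omega) := by
  intro x hx
  rw [List.mem_iff_getElem] at hx
  obtain ⟨t, ht, rfl⟩ := hx
  rw [List.getElem_drop]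
  exact sorted_getElem_lt hs (by simp [List.length_drop] at ht; omega) (by omega)

private lemma tri (k : ℕ) : k * (k + 1) = 2 * Nat.choose k 2 + 2 * k := by
  have h := two_choose k
  cases k with
  | zero => simp
  | succ u => simp only [Nat.succ_sub_one] at h; nlinarith [h]

private lemma tauMax_len (n k : ℕ) (hk : 1 ≤ k) : (tauMax n k).length = k := by
  simp [tauMax]; omega

private lemma revsum (t : ℕ) : 2 * ((List.range t).reverse.map (· + 1)).sum = t * (t + 1) := by
  rw [List.map_reverse, List.sum_reverse]; exact rs t

private lemma tauMax_sum (n k : ℕ) (hk : 1 ≤ k) (hn : k * (k + 1) ≤ 2 * n) :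
    (tauMax n k).sum = n := by
  have h1 := revsum (k - 1)
  have h2 := two_choose k
  have h4 := tri k
  have h3 : (k-1) * (k-1+1) = k * (k-1) := by
    cases k with
    | zero => omega
    | succ u => simp [Nat.succ_sub_one]; ring
  simp only [tauMax, List.sum_cons]
  omega

private lemma tauMax_drop_sum (n k i : ℕ) (h1 : 1 ≤ i) (h2 : i ≤ k) :
    2 * ((tauMax n k).drop i).sum = (k - i) * (k - i + 1) := by
  obtain ⟨t, rfl⟩ : ∃ t, i = t + 1 := ⟨i - 1, by omega⟩
  show 2 * (((List.range (k-1)).reverse.map (· + 1)).drop t).sum = _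
  rw [← List.map_drop, List.drop_reverse, List.length_range, List.take_range]
  have : min (k - 1 - t) (k - 1) = k - (t+1) := by omega
  rw [this]
  have := revsum (k - (t+1))
  omega

private lemma tauMax_sorted (n k : ℕ) (hk : 1 ≤ k) (hn : k * (k + 1) ≤ 2 * n) :
    (tauMax n k).Pairwise (· > ·) := by
  have h2 := two_choose k
  have h4 := tri k
  constructor
  · intro x hx
    simp only [List.mem_map, List.mem_reverse, List.mem_range] at hx
    obtain ⟨y, hy, rfl⟩ := hx
    omega
  · rw [List.pairwise_map, List.pairwise_reverse]
    exact (List.pairwise_lt_range (n := _)).imp (fun h => by omega)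

private lemma tauMax_pos (n k : ℕ) (hk : 1 ≤ k) (hn : k * (k + 1) ≤ 2 * n) :
    ∀ x ∈ tauMax n k, 0 < x := by
  have h2 := two_choose k
  have h4 := tri k
  intro x hx
  rcases List.mem_cons.1 hx with rfl | hx
  · omega
  · simp only [List.mem_map, List.mem_reverse, List.mem_range] at hx
    obtain ⟨y, hy, rfl⟩ := hx
    omega

private lemma tauMax_maj (n k : ℕ) (hk : 1 ≤ k) (hn : k * (k + 1) ≤ 2 * n)
    {γ : List ℕ} (hγ : DisPart n γ) (hl : k ≤ γ.length) : Majorizes (tauMax n k) γ := by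
  obtain ⟨hs, hp, hsum⟩ := hγ
  constructor
  · rw [tauMax_sum n k hk hn, hsum]
  · intro i hi
    rw [tauMax_len n k hk] at hi
    rcases Nat.eq_zero_or_pos i with rfl | hi1
    · simp
    have hik : i ≤ k := le_trans hi (min_le_right _ _)
    have hiℓ : i ≤ γ.length := le_trans hi (min_le_left _ _)
    have hA : (γ.length - i) * (γ.length - i + 1) ≤ 2 * (γ.drop i).sum := by
      have := lemDis (List.Pairwise.sublist (List.drop_sublist i γ) hs)
        (fun x hx => hp x (List.mem_of_mem_drop hx))
      rwa [List.length_drop] at this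
    have hB := tauMax_drop_sum n k i hi1 hik
    have hC := List.sum_take_add_sum_drop γ i
    have hC' := List.sum_take_add_sum_drop (tauMax n k) i
    rw [hsum] at hC
    rw [tauMax_sum n k hk hn] at hC'
    have hD : (k - i) * (k - i + 1) ≤ (γ.length - i) * (γ.length - i + 1) :=
      Nat.mul_le_mul (by omega) (by omega)
    linarith

private lemma tauMin_len (n m : ℕ) : (tauMin n m).length = m := by simp [tauMin]

private lemma tauMin_sorted (n m : ℕ) : (tauMin n m).Pairwise (· > ·) := by
  rw [tauMin, List.pairwise_map]
  rw [List.pairwise_iff_getElem]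
  intro a b ha hb hab
  simp only [List.getElem_range] at *
  simp only [List.length_range] at ha hb
  split_ifs <;> omega

private lemma tauMin_pos (n m : ℕ) : ∀ x ∈ tauMin n m, 0 < x := by
  intro x hx
  simp only [tauMin, List.mem_map, List.mem_range] at hx
  obtain ⟨y, hy, rfl⟩ := hx
  have h1 : 0 < m - y := by omega
  calc 0 < m - y := h1
    _ ≤ (m - y) + (n - Nat.choose (m + 1) 2) / m := Nat.le_add_right _ _
    _ ≤ _ := Nat.le_add_right _ _

private lemma ite_sum_lt (r : ℕ) : ∀ a, ∑ t ∈ Finset.range a, (if t < r then 1 else 0) = min a r := by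
  intro a
  induction a with
  | zero => simp
  | succ u ih => rw [Finset.sum_range_succ, ih]; split_ifs <;> omega

private lemma range_sub_sum (m i : ℕ) (hi : i ≤ m) :
    2 * (∑ t ∈ Finset.range i, (m - t)) + i * i = 2 * (i * m) + i := by
  rw [← Finset.sum_range_reflect]
  have h1 : ∀ j ∈ Finset.range i, m - (i - 1 - j) = m - i + 1 + j := by
    intro j hj; rw [Finset.mem_range] at hj; omega
  rw [Finset.sum_congr rfl h1]
  rw [Finset.sum_add_distrib, Finset.sum_const, Finset.card_range, smul_eq_mul]
  have h2 := Finset.sum_range_id_mul_two i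
  rcases Nat.eq_zero_or_pos i with rfl | hi1
  · simp
  have h3 : 2 * (i * (m - i + 1)) + i * (i-1) + i * i = 2 * (i * m) + i := by
    zify [hi, hi1]
    ring
  omega

private lemma tauMin_take (n m i : ℕ) (hm : 1 ≤ m) (hi : i ≤ m) :
    2 * ((tauMin n m).take i).sum + i * i =
      2 * (i * m) + i + 2 * (i * ((n - Nat.choose (m + 1) 2) / m)) +
        2 * min i ((n - Nat.choose (m + 1) 2) % m) := by
  set q := (n - Nat.choose (m + 1) 2) / m with hq
  set r := (n - Nat.choose (m + 1) 2) % m with hr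
  have ht : (tauMin n m).take i =
      (List.range i).map (fun t => (m - t) + q + (if t < r then 1 else 0)) := by
    rw [tauMin, ← List.map_take, List.take_range, min_eq_left hi]
  rw [ht, list_range_map_sum]
  rw [Finset.sum_add_distrib, Finset.sum_add_distrib, Finset.sum_const, Finset.card_range,
    smul_eq_mul, ite_sum_lt]
  have h1 := range_sub_sum m i hi
  omega

private lemma tauMin_sum (n m : ℕ) (hm : 1 ≤ m) (hn : m * (m + 1) ≤ 2 * n) :
    (tauMin n m).sum = n := by
  have h1 := tauMin_take n m m hm le_rfl
  have hfull : (tauMin n m).take m = tauMin n m :=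
    List.take_of_length_le (le_of_eq (tauMin_len n m))
  rw [hfull] at h1
  set q := (n - Nat.choose (m + 1) 2) / m with hq
  set r := (n - Nat.choose (m + 1) 2) % m with hr
  have hdm : m * q + r = n - Nat.choose (m + 1) 2 := Nat.div_add_mod _ m
  have hrm : r < m := Nat.mod_lt _ (by omega)
  have hmin : min m r = r := min_eq_right (le_of_lt hrm)
  rw [hmin] at h1
  have hc : 2 * Nat.choose (m + 1) 2 = (m + 1) * m := by
    have := two_choose (m + 1); simpa using this
  have hb2 : m * (m + 1) = m * m + m := by ring
  have hb3 : (m + 1) * m = m * m + m := by ring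
  omega

private lemma tauMin_maj (n m : ℕ) (hm : 1 ≤ m) (hn : m * (m + 1) ≤ 2 * n)
    {γ : List ℕ} (hγ : DisPart n γ) (hl : γ.length ≤ m) : Majorizes γ (tauMin n m) := by
  obtain ⟨hs, hp, hsum⟩ := hγ
  constructor
  · rw [tauMin_sum n m hm hn, hsum]
  · intro i hi
    rw [tauMin_len n m] at hi
    rcases Nat.eq_zero_or_pos i with rfl | hi1
    · simp
    have hiℓ : i ≤ γ.length := le_trans hi (min_le_right _ _)
    have him : i ≤ m := by omega
    have hS := tauMin_take n m i hm him
    set q := (n - Nat.choose (m + 1) 2) / m with hq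
    set r := (n - Nat.choose (m + 1) 2) % m with hr
    set ℓ := γ.length with hℓ
    set g := γ[i-1]'(by omega) with hg
    set T := (γ.take i).sum with hT
    set D := (γ.drop i).sum with hD
    -- prefix bound
    have hA : 2 * (i * g) + i * i ≤ 2 * T + i := by
      have := lemL (List.Pairwise.sublist (List.take_sublist i γ) hs) (take_ge hs hi1 hiℓ)
      rwa [List.length_take, min_eq_left hiℓ] at this
    -- suffix bound
    have hB : 2 * D + (ℓ - i) * (ℓ - i) + (ℓ - i) ≤ 2 * ((ℓ - i) * g) := by
      have := lemU (List.Pairwise.sublist (List.drop_sublist i γ) hs) (drop_lt hs hi1 hiℓ)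
      rwa [List.length_drop] at this
    have hC : T + D = n := by rw [hT, hD, List.sum_take_add_sum_drop, hsum]
    have hg1 : 1 ≤ g := hp _ (List.getElem_mem _)
    have hdm : m * q + r = n - Nat.choose (m + 1) 2 := Nat.div_add_mod _ m
    have hrm : r < m := Nat.mod_lt _ (by omega)
    have hc : 2 * Nat.choose (m + 1) 2 = (m + 1) * m := by
      have := two_choose (m + 1); simpa using this
    have hb3 : (m + 1) * m = m * m + m := by ring
    have hCn : 2 * Nat.choose (m + 1) 2 ≤ 2 * n := by
      have hb2 : m * (m + 1) = m * m + m := by ring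
      omega
    have h2n : 2 * (m * q) + 2 * r + m * m + m = 2 * n := by omega
    -- goal : ((tauMin n m).take i).sum ≤ T
    show ((tauMin n m).take i).sum ≤ T
    -- move to integers
    set S := ((tauMin n m).take i).sum with hSdef
    set s := ℓ - i with hsdef
    set mn := min i r with hmn
    have hsi : i + s = ℓ := by omega
    have hminr' : mn ≤ r := min_le_right i r
    have hmini' : mn ≤ i := min_le_left i r
    have hsm' : i + s ≤ m := by omega
    zify at hS hA hB hC h2n hg1 hminr' hmini' hsm' ⊢
    have hminr := hminr'
    have hmini := hmini'
    have hsm := hsm'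
    rcases le_or_gt ((m : ℤ) + q + 2) ((g : ℤ) + i) with hcase | hcase
    · -- g large: use prefix bound
      have hprod : (i : ℤ) * (m + q + 2) ≤ i * (g + i) := by
        apply mul_le_mul_of_nonneg_left hcase (by positivity)
      linarith only [hS, hA, hprod, hmini]
    · -- g small: use suffix bound
      have hprod : (s : ℤ) * g ≤ s * ((m : ℤ) + q + 1 - i) := by
        apply mul_le_mul_of_nonneg_left (by omega) (by positivity)
      have hsq : (0:ℤ) ≤ ((m : ℤ) - s - i) ^ 2 := sq_nonneg _
      have hqm : (0:ℤ) ≤ (q : ℤ) * ((m : ℤ) - s - i) :=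
        mul_nonneg (by positivity) (by linarith)
      linarith only [hS, hB, hC, h2n, hprod, hminr, hsq, hqm, hsm]

/-- For γ₁ ∈ Dis_k(n) and γ₂ ∈ Dis_j(n), any least upper bound of γ₁, γ₂ in
Dis(n) has length min{j,k} and any greatest lower bound has length max{j,k}; in particular
for γ₁, γ₂ ∈ Dis_k(n) any LUB or GLB lies in Dis_k(n). -/
theorem stmt8 (n j k : ℕ) (γ₁ γ₂ : List ℕ) (h₁ : DisPartK n k γ₁) (h₂ : DisPartK n j γ₂) :
    (∀ σ, DisPart n σ → IsLubDis n γ₁ γ₂ σ → σ.length = min j k) ∧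
      (∀ ρ, DisPart n ρ → IsGlbDis n γ₁ γ₂ ρ → ρ.length = max j k) ∧
      (j = k → (∀ σ, DisPart n σ → IsLubDis n γ₁ γ₂ σ → DisPartK n k σ) ∧
        (∀ ρ, DisPart n ρ → IsGlbDis n γ₁ γ₂ ρ → DisPartK n k ρ)) := by
  obtain ⟨⟨hs1, hp1, hsum1⟩, hlen1⟩ := h₁
  obtain ⟨⟨hs2, hp2, hsum2⟩, hlen2⟩ := h₂
  by_cases hk0 : k = 0 ∨ j = 0
  · -- degenerate: n = 0, all partitions empty
    have hn0 : n = 0 := by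
      rcases hk0 with h | h
      · have h1 : γ₁ = [] := List.length_eq_zero_iff.1 (by omega)
        rw [h1] at hsum1; simpa using hsum1.symm
      · have h1 : γ₂ = [] := List.length_eq_zero_iff.1 (by omega)
        rw [h1] at hsum2; simpa using hsum2.symm
    subst hn0
    have hj0 : j = 0 := by
      have := disZero hp2 hsum2; rw [this] at hlen2; simpa using hlen2.symm
    have hk0' : k = 0 := by
      have := disZero hp1 hsum1; rw [this] at hlen1; simpa using hlen1.symm
    subst hj0; subst hk0'
    refine ⟨?_, ?_, ?_⟩
    · intro σ hσ _
      rw [disZero hσ.2.1 hσ.2.2]; simp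
    · intro ρ hρ _
      rw [disZero hρ.2.1 hρ.2.2]; simp
    · intro _
      constructor
      · intro σ hσ _
        exact ⟨hσ, by rw [disZero hσ.2.1 hσ.2.2]; simp⟩
      · intro ρ hρ _
        exact ⟨hρ, by rw [disZero hρ.2.1 hρ.2.2]; simp⟩
  · push_neg at hk0
    have hk1 : 1 ≤ k := by omega
    have hj1 : 1 ≤ j := by omega
    have h2n1 : k * (k + 1) ≤ 2 * n := by
      have := lemDis hs1 hp1; rw [hlen1, hsum1] at this; omega
    have h2n2 : j * (j + 1) ≤ 2 * n := by
      have := lemDis hs2 hp2; rw [hlen2, hsum2] at this; omega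
    have hminn : (min j k) * (min j k + 1) ≤ 2 * n := by
      rcases min_choice j k with h | h <;> rw [h]
      · exact h2n2
      · exact h2n1
    have hmaxn : (max j k) * (max j k + 1) ≤ 2 * n := by
      rcases max_choice j k with h | h <;> rw [h]
      · exact h2n2
      · exact h2n1
    have hmin1 : 1 ≤ min j k := by omega
    have hmax1 : 1 ≤ max j k := by omega
    have hub : ∀ σ, DisPart n σ → IsLubDis n γ₁ γ₂ σ → σ.length = min j k := by
      intro σ hσ hlub
      obtain ⟨hmaj1, hmaj2, hleast⟩ := hlub
      have hle1 : σ.length ≤ k := by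
        have := lenMaj hmaj1 hσ.2.1; omega
      have hle2 : σ.length ≤ j := by
        have := lenMaj hmaj2 hσ.2.1; omega
      have htd : DisPart n (tauMax n (min j k)) :=
        ⟨tauMax_sorted n _ hmin1 hminn, tauMax_pos n _ hmin1 hminn, tauMax_sum n _ hmin1 hminn⟩
      have ht1 : Majorizes (tauMax n (min j k)) γ₁ :=
        tauMax_maj n _ hmin1 hminn ⟨hs1, hp1, hsum1⟩ (by omega)
      have ht2 : Majorizes (tauMax n (min j k)) γ₂ :=
        tauMax_maj n _ hmin1 hminn ⟨hs2, hp2, hsum2⟩ (by omega)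
      have hms := hleast _ htd ht1 ht2
      have := lenMaj hms htd.2.1
      rw [tauMax_len n _ hmin1] at this
      omega
    have hglb : ∀ ρ, DisPart n ρ → IsGlbDis n γ₁ γ₂ ρ → ρ.length = max j k := by
      intro ρ hρ hglb'
      obtain ⟨hmaj1, hmaj2, hgreatest⟩ := hglb'
      have hge1 : k ≤ ρ.length := by
        have := lenMaj hmaj1 hp1; omega
      have hge2 : j ≤ ρ.length := by
        have := lenMaj hmaj2 hp2; omega
      have htd : DisPart n (tauMin n (max j k)) :=
        ⟨tauMin_sorted n _, tauMin_pos n _, tauMin_sum n _ hmax1 hmaxn⟩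
      have ht1 : Majorizes γ₁ (tauMin n (max j k)) :=
        tauMin_maj n _ hmax1 hmaxn ⟨hs1, hp1, hsum1⟩ (by omega)
      have ht2 : Majorizes γ₂ (tauMin n (max j k)) :=
        tauMin_maj n _ hmax1 hmaxn ⟨hs2, hp2, hsum2⟩ (by omega)
      have hms := hgreatest _ htd ht1 ht2
      have := lenMaj hms hρ.2.1
      rw [tauMin_len n _] at this
      omega
    refine ⟨hub, hglb, ?_⟩
    intro hjk
    constructor
    · intro σ hσ hlub
      exact ⟨hσ, by rw [hub σ hσ hlub]; omega⟩
    · intro ρ hρ hglb'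
      exact ⟨hρ, by rw [hglb ρ hρ hglb']; omega⟩
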